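/- In a finite discounted MDP, for any two policies π and π* and any step n ≥ 0, E_{(s,a)∼ρ_π^n}[q_{π*}(s,a) − q_π(s,a)] = γ E_{s∼d_π^{n+1}}[Σ_a q_{π*}(s,a)(π*(a|s) − π(a|s))] + γ E_{(s,a)∼ρ_π^{n+1}}[q_{π*}(s,a) − q_π(s,a)], where d_π^t(s) = Pr(s_t = s; π) and ρ_π^t(s,a) = π(a|s) d_π^t(s). -/
import Mathlib


open scoped BigOperators

/-- The time-`t` state distribution under policy `π`, starting from `d0`. -/
noncomputable def stateDist {S A : Type*} [Fintype S] [Fintype A]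
    (T : S → A → S → ℝ) (π : S → A → ℝ) (d0 : S → ℝ) : ℕ → S → ℝ
  | 0 => d0
  | n + 1 => fun s' => ∑ s, ∑ a, stateDist T π d0 n s * π s a * T s a s'

/-- The discounted stationary state distribution `d_π(s) = (1-γ) ∑_t γ^t d_π^t(s)`. -/
noncomputable def discStateDist {S A : Type*} [Fintype S] [Fintype A]
    (T : S → A → S → ℝ) (π : S → A → ℝ) (d0 : S → ℝ) (γ : ℝ) : S → ℝ :=
  fun s => (1 - γ) * ∑' t : ℕ, γ ^ t * stateDist T π d0 t s

/-- one-step recursion for the weighted tail term. -/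
theorem tail_term_one_step_recursion
    {S A : Type*} [Fintype S] [Fintype A]
    (T : S → A → S → ℝ) (r : S → A → ℝ) (γ : ℝ) (d0 : S → ℝ) (Rmax : ℝ)
    (π πs : S → A → ℝ) (q qs : S → A → ℝ)
    (hγ : 0 < γ ∧ γ < 1)
    (hT : ∀ s a, (∀ s', 0 ≤ T s a s') ∧ ∑ s', T s a s' = 1)
    (hd0 : (∀ s, 0 ≤ d0 s) ∧ ∑ s, d0 s = 1)
    (hπ : ∀ s, (∀ a, 0 ≤ π s a) ∧ ∑ a, π s a = 1)
    (hπs : ∀ s, (∀ a, 0 ≤ πs s a) ∧ ∑ a, πs s a = 1)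
    (hr : ∀ s a, 0 ≤ r s a ∧ r s a ≤ Rmax)
    (hq : ∀ s a, q s a = r s a + γ * ∑ s', T s a s' * ∑ a', π s' a' * q s' a')
    (hqs : ∀ s a, qs s a = r s a + γ * ∑ s', T s a s' * ∑ a', πs s' a' * qs s' a')
    (n : ℕ) :
    (∑ s, ∑ a, (π s a * stateDist T π d0 n s) * (qs s a - q s a))
      = γ * (∑ s, stateDist T π d0 (n + 1) s * ∑ a, qs s a * (πs s a - π s a))
        + γ * ∑ s, ∑ a, (π s a * stateDist T π d0 (n + 1) s) * (qs s a - q s a) := by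
  set d := stateDist T π d0 with hd
  set F : S → ℝ := fun s' => ∑ a', (πs s' a' * qs s' a' - π s' a' * q s' a') with hF
  have hd1 : ∀ s', d (n+1) s' = ∑ s, ∑ a, d n s * π s a * T s a s' := fun s' => rfl
  have key : ∀ s a, qs s a - q s a = γ * ∑ s', T s a s' * F s' := by
    intro s a
    have h1 : ∑ s', T s a s' * F s'
        = ∑ s', T s a s' * ∑ a', πs s' a' * qs s' a'
          - ∑ s', T s a s' * ∑ a', π s' a' * q s' a' := by
      rw [← Finset.sum_sub_distrib]
      exact Finset.sum_congr rfl fun s' _ => by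
        simp only [hF]; rw [Finset.sum_sub_distrib, mul_sub]
    rw [hq s a, hqs s a, h1]; ring
  have hR : γ * (∑ s, d (n+1) s * ∑ a, qs s a * (πs s a - π s a))
      + γ * ∑ s, ∑ a, (π s a * d (n+1) s) * (qs s a - q s a)
      = γ * ∑ s, d (n+1) s * F s := by
    rw [← mul_add, ← Finset.sum_add_distrib]
    congr 1
    refine Finset.sum_congr rfl fun s _ => ?_
    rw [hF]
    simp_rw [Finset.mul_sum, ← Finset.sum_add_distrib]
    exact Finset.sum_congr rfl fun a _ => by ring
  rw [hR]
  simp_rw [key, hd1, Finset.sum_mul, Finset.mul_sum]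
  conv_rhs => rw [Finset.sum_comm]
  refine Finset.sum_congr rfl fun s _ => ?_
  conv_rhs => rw [Finset.sum_comm]
  refine Finset.sum_congr rfl fun a _ => ?_
  exact Finset.sum_congr rfl fun s' _ => by ring
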